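/- Let $T$ be a measure-preserving transformation of a probability space $(X,\mathcal{B},\mu)$, $\{W_n\}$ a sequence of measurable sets, and $\{q_n\}$ an increasing sequence of natural numbers. Then the following are equivalent: (a) for every measurable set $A$, $\mu((T^{-q_n}A \triangle A) \cap W_n) \to 0$; (b) for every $f \in L^1(X,\mu)$, the functions $\chi_{W_n} \cdot (f \circ T^{q_n} - f)$ converge to $0$ in measure. -/

import Mathlib

open MeasureTheory Filter
open scoped ENNReal NNReal symmDiff

lemma aux_simple {X : Type*} [MeasurableSpace X] (μ : Measure X) [IsProbabilityMeasure μ]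
    (T : X → X) (hT : MeasurePreserving T μ μ)
    (W : ℕ → Set X) (hW : ∀ n, MeasurableSet (W n)) (q : ℕ → ℕ)
    (ha : ∀ A : Set X, MeasurableSet A →
        Tendsto (fun n => μ ((symmDiff (T^[q n] ⁻¹' A) A) ∩ W n)) atTop (nhds 0))
    (g : SimpleFunc X ℝ) :
    Tendsto (fun n => ∫⁻ x in W n, (‖g (T^[q n] x) - g x‖₊ : ℝ≥0∞) ∂μ) atTop (nhds 0) := by
  have hTm : ∀ n, Measurable (T^[q n]) := fun n => hT.measurable.iterate (q n)
  induction g using SimpleFunc.induction with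
  | @const c s hs =>
    have key : ∀ n, (fun x => (‖(SimpleFunc.piecewise s hs (SimpleFunc.const X c)
          (SimpleFunc.const X 0)) (T^[q n] x) -
          (SimpleFunc.piecewise s hs (SimpleFunc.const X c) (SimpleFunc.const X 0)) x‖₊ : ℝ≥0∞))
        = (symmDiff (T^[q n] ⁻¹' s) s).indicator (fun _ => (‖c‖₊ : ℝ≥0∞)) := by
      intro n
      funext x
      by_cases h1 : T^[q n] x ∈ s <;> by_cases h2 : x ∈ s <;>
        simp [Set.indicator, Set.mem_symmDiff, h1, h2]
    have heq : ∀ n, ∫⁻ x in W n, (‖(SimpleFunc.piecewise s hs (SimpleFunc.const X c)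
          (SimpleFunc.const X 0)) (T^[q n] x) -
          (SimpleFunc.piecewise s hs (SimpleFunc.const X c) (SimpleFunc.const X 0)) x‖₊ : ℝ≥0∞) ∂μ
        = (‖c‖₊ : ℝ≥0∞) * μ ((symmDiff (T^[q n] ⁻¹' s) s) ∩ W n) := by
      intro n
      have hD : MeasurableSet (symmDiff (T^[q n] ⁻¹' s) s) :=
        ((hTm n) hs).symmDiff hs
      rw [key n, lintegral_indicator hD, setLIntegral_const, Measure.restrict_apply hD,
        mul_comm]
    simp only [heq]
    have := ENNReal.Tendsto.const_mul (ha s hs)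
      (Or.inr (ENNReal.coe_ne_top (r := ‖c‖₊)))
    simpa using this
  | @add f g hdisj hf hg =>
    refine tendsto_of_tendsto_of_tendsto_of_le_of_le (tendsto_const_nhds (x := (0 : ℝ≥0∞)))
      (by simpa using hf.add hg) (fun n => zero_le) (fun n => ?_)
    calc ∫⁻ x in W n, (‖(f + g) (T^[q n] x) - (f + g) x‖₊ : ℝ≥0∞) ∂μ
        ≤ ∫⁻ x in W n,
            ((‖f (T^[q n] x) - f x‖₊ : ℝ≥0∞) + (‖g (T^[q n] x) - g x‖₊ : ℝ≥0∞)) ∂μ := by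
          refine lintegral_mono fun x => ?_
          have : (f + g) (T^[q n] x) - (f + g) x
              = (f (T^[q n] x) - f x) + (g (T^[q n] x) - g x) := by
            simp only [SimpleFunc.coe_add, Pi.add_apply]; ring
          rw [this]
          exact ENNReal.coe_le_coe.2 (nnnorm_add_le _ _)
      _ = (∫⁻ x in W n, (‖f (T^[q n] x) - f x‖₊ : ℝ≥0∞) ∂μ)
          + ∫⁻ x in W n, (‖g (T^[q n] x) - g x‖₊ : ℝ≥0∞) ∂μ := by
          exact lintegral_add_left
            ((f.measurable.comp (hTm n)).sub f.measurable).enorm _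

/-- Rigidity of `q n` for `T` along `W n` is equivalent to convergence in measure of
`χ_{W n} · (f ∘ T^[q n] - f)` to `0` for every integrable `f`. -/
theorem stmt1 {X : Type*} [MeasurableSpace X] (μ : Measure X) [IsProbabilityMeasure μ]
    (T : X → X) (hT : MeasurePreserving T μ μ)
    (W : ℕ → Set X) (hW : ∀ n, MeasurableSet (W n))
    (q : ℕ → ℕ) (hq : StrictMono q) :
    (∀ A : Set X, MeasurableSet A →
        Tendsto (fun n => μ ((symmDiff (T^[q n] ⁻¹' A) A) ∩ W n)) atTop (nhds 0)) ↔
      (∀ f : X → ℝ, Integrable f μ →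
        TendstoInMeasure μ (fun n => (W n).indicator (fun x => f (T^[q n] x) - f x))
          atTop (0 : X → ℝ)) := by
  have hTn : ∀ n, MeasurePreserving (T^[q n]) μ μ := fun n => hT.iterate (q n)
  constructor
  · intro ha f hf
    have hmeas : ∀ n, AEStronglyMeasurable
        ((W n).indicator (fun x => f (T^[q n] x) - f x)) μ := by
      intro n
      exact (((hf.1.comp_quasiMeasurePreserving
        (hTn n).quasiMeasurePreserving)).sub hf.1).indicator (hW n)
    refine tendstoInMeasure_of_tendsto_eLpNorm (p := 1) one_ne_zero hmeas
      aestronglyMeasurable_zero ?_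
    simp only [sub_zero, eLpNorm_one_eq_lintegral_enorm, enorm_eq_nnnorm]
    have hlin : ∀ n, ∫⁻ x, (‖(W n).indicator (fun x => f (T^[q n] x) - f x) x‖₊ : ℝ≥0∞) ∂μ
        = ∫⁻ x in W n, (‖f (T^[q n] x) - f x‖₊ : ℝ≥0∞) ∂μ := by
      intro n
      rw [← lintegral_indicator (hW n)]
      congr 1
      funext x
      by_cases hx : x ∈ W n <;> simp [Set.indicator, hx]
    simp only [hlin]
    rw [ENNReal.tendsto_atTop_zero]
    intro ε hε
    -- choose a simple function approximation
    set e2 := ε / 2 with he2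
    set e4 := e2 / 2 with he4
    have he4pos : e4 ≠ 0 := (ENNReal.half_pos (ENNReal.half_pos hε.ne').ne').ne'
    have hε' : min e4 1 ≠ 0 := (lt_min he4pos.bot_lt one_pos).ne'
    obtain ⟨g, hg, _⟩ := (memLp_one_iff_integrable.2 hf).exists_simpleFunc_eLpNorm_sub_lt
      ENNReal.one_ne_top hε'
    have hδ : eLpNorm (f - ⇑g) 1 μ ≤ e4 :=
      le_trans hg.le (min_le_left _ _)
    rw [eLpNorm_one_eq_lintegral_enorm] at hδ
    -- the simple part tends to zero
    have hgs := aux_simple μ T hT W hW q ha g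
    rw [ENNReal.tendsto_atTop_zero] at hgs
    obtain ⟨N, hN⟩ := hgs e2 (ENNReal.half_pos hε.ne')
    refine ⟨N, fun n hn => ?_⟩
    have hcomp : ∫⁻ x, (‖f (T^[q n] x) - g (T^[q n] x)‖₊ : ℝ≥0∞) ∂μ
        = ∫⁻ x, (‖f x - g x‖₊ : ℝ≥0∞) ∂μ := by
      have hae : AEMeasurable (fun x => (‖f x - g x‖₊ : ℝ≥0∞)) (μ.map (T^[q n])) := by
        rw [(hTn n).map_eq]
        exact (hf.1.sub g.aestronglyMeasurable).enorm
      calc ∫⁻ x, (‖f (T^[q n] x) - g (T^[q n] x)‖₊ : ℝ≥0∞) ∂μ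
          = ∫⁻ x, (‖f x - g x‖₊ : ℝ≥0∞) ∂(μ.map (T^[q n])) :=
            (lintegral_map' hae (hTn n).measurable.aemeasurable).symm
        _ = ∫⁻ x, (‖f x - g x‖₊ : ℝ≥0∞) ∂μ := by rw [(hTn n).map_eq]
    calc ∫⁻ x in W n, (‖f (T^[q n] x) - f x‖₊ : ℝ≥0∞) ∂μ
        ≤ ∫⁻ x in W n, ((‖g (T^[q n] x) - g x‖₊ : ℝ≥0∞)
            + ((‖f (T^[q n] x) - g (T^[q n] x)‖₊ : ℝ≥0∞) + (‖f x - g x‖₊ : ℝ≥0∞))) ∂μ := by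
          refine lintegral_mono fun x => ?_
          have : f (T^[q n] x) - f x = (g (T^[q n] x) - g x)
              + ((f (T^[q n] x) - g (T^[q n] x)) + (-(f x - g x))) := by ring
          rw [this]
          calc ((‖(g (T^[q n] x) - g x) + ((f (T^[q n] x) - g (T^[q n] x)) + (-(f x - g x)))‖₊ : ℝ≥0∞))
              ≤ (‖g (T^[q n] x) - g x‖₊ : ℝ≥0∞)
                + (‖(f (T^[q n] x) - g (T^[q n] x)) + (-(f x - g x))‖₊ : ℝ≥0∞) := by
                exact_mod_cast nnnorm_add_le _ _
            _ ≤ _ := by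
                gcongr
                calc ((‖(f (T^[q n] x) - g (T^[q n] x)) + (-(f x - g x))‖₊ : ℝ≥0∞))
                    ≤ (‖f (T^[q n] x) - g (T^[q n] x)‖₊ : ℝ≥0∞) + (‖-(f x - g x)‖₊ : ℝ≥0∞) := by
                      exact_mod_cast nnnorm_add_le _ _
                  _ = _ := by rw [nnnorm_neg]
      _ ≤ (∫⁻ x in W n, (‖g (T^[q n] x) - g x‖₊ : ℝ≥0∞) ∂μ)
          + ∫⁻ x in W n, ((‖f (T^[q n] x) - g (T^[q n] x)‖₊ : ℝ≥0∞)
            + (‖f x - g x‖₊ : ℝ≥0∞)) ∂μ := by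
          exact le_of_eq (lintegral_add_left
            ((g.measurable.comp (hT.measurable.iterate (q n))).sub g.measurable).enorm _)
      _ ≤ e2 + ((∫⁻ x, (‖f (T^[q n] x) - g (T^[q n] x)‖₊ : ℝ≥0∞) ∂μ)
            + ∫⁻ x, (‖f x - g x‖₊ : ℝ≥0∞) ∂μ) := by
          gcongr
          · exact hN n hn
          · calc ∫⁻ x in W n, ((‖f (T^[q n] x) - g (T^[q n] x)‖₊ : ℝ≥0∞)
                  + (‖f x - g x‖₊ : ℝ≥0∞)) ∂μ
                ≤ ∫⁻ x, ((‖f (T^[q n] x) - g (T^[q n] x)‖₊ : ℝ≥0∞)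
                  + (‖f x - g x‖₊ : ℝ≥0∞)) ∂μ := setLIntegral_le_lintegral _ _
              _ ≤ _ := by
                  refine le_of_eq (lintegral_add_left' ?_ _)
                  have hae : AEMeasurable (fun x => (‖f x - g x‖₊ : ℝ≥0∞)) μ :=
                    (hf.1.sub g.aestronglyMeasurable).enorm
                  exact (hae.comp_quasiMeasurePreserving (hTn n).quasiMeasurePreserving)
      _ ≤ e2 + (e4 + e4) := by
          rw [hcomp]
          gcongr <;> exact hδ
      _ = e2 + e2 := by rw [ENNReal.add_halves e2]
      _ = ε := ENNReal.add_halves ε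
  · intro hb A hA
    have hf : Integrable (A.indicator (fun _ => (1 : ℝ))) μ :=
      (integrable_const (1 : ℝ)).indicator hA
    have h1 := hb _ hf 1 one_pos
    refine tendsto_of_tendsto_of_tendsto_of_le_of_le
      (tendsto_const_nhds (x := (0 : ℝ≥0∞))) h1 (fun n => zero_le) (fun n => ?_)
    refine measure_mono fun x hx => ?_
    obtain ⟨hxs, hxW⟩ := hx
    simp only [Set.mem_setOf_eq]
    have hxval : (W n).indicator
        (fun x => A.indicator (fun _ => (1:ℝ)) (T^[q n] x) - A.indicator (fun _ => (1:ℝ)) x) x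
        = A.indicator (fun _ => (1:ℝ)) (T^[q n] x) - A.indicator (fun _ => (1:ℝ)) x := by
      simp [Set.indicator_of_mem hxW]
    rw [Set.mem_symmDiff] at hxs
    rcases hxs with ⟨h1', h2'⟩ | ⟨h1', h2'⟩ <;>
      · simp only [Set.mem_preimage] at h1' h2'
        simp [Real.dist_eq, hxval, Set.indicator, hxW, h1', h2']
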